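/- Let f : C → D be a map of lower n-triangular cochain complexes with components f_{l,k} : C^{k,q} → D^{l,q} (zero for k > l). If each diagonal component f_{k,k} : C^{k,*} → D^{k,*} is a quasi-isomorphism of cochain complexes, then f itself is a quasi-isomorphism. -/
import Mathlib


/-! Cochain complexes of `R`-modules are given elementwise: a family of modules `X q` (`q : ℤ`)
together with maps `dX q : X q →ₗ[R] X (q+1)`. -/

/-- A chain map `f` between (elementwise given) cochain complexes is a quasi-isomorphism:
it is surjective and injective on cohomology. -/
def IsQuasiIso (R : Type) [Ring R] (X Y : ℤ → Type)
    [∀ q, AddCommGroup (X q)] [∀ q, Module R (X q)]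
    [∀ q, AddCommGroup (Y q)] [∀ q, Module R (Y q)]
    (dX : ∀ q, X q →ₗ[R] X (q + 1)) (dY : ∀ q, Y q →ₗ[R] Y (q + 1))
    (f : ∀ q, X q →ₗ[R] Y q) : Prop :=
  (∀ (q : ℤ) (y : Y (q + 1)), dY (q + 1) y = 0 →
      ∃ x : X (q + 1), dX (q + 1) x = 0 ∧ ∃ u : Y q, y - f (q + 1) x = dY q u) ∧
  (∀ (q : ℤ) (x : X (q + 1)), dX (q + 1) x = 0 → (∃ u : Y q, f (q + 1) x = dY q u) →
      ∃ v : X q, dX q v = x)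

private lemma sum_update_add {n : ℕ} {R : Type} [Ring R] {M : Fin n → Type}
    [∀ k, AddCommGroup (M k)] [∀ k, Module R (M k)] {N : Type} [AddCommGroup N] [Module R N]
    (g : ∀ k, M k →ₗ[R] N) (X : ∀ k, M k) (P : Fin n) (a : M P) :
    ∑ k, g k (Function.update X P (X P + a) k) = (∑ k, g k (X k)) + g P a := by
  have h : (fun k => g k (Function.update X P (X P + a) k))
      = Function.update (fun k => g k (X k)) P (g P (X P + a)) := by
    funext k
    by_cases hk : k = P
    · subst hk; simp
    · simp [Function.update_of_ne hk]
  rw [h, Finset.sum_update_of_mem (Finset.mem_univ P), map_add]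
  rw [Finset.sum_eq_sum_sdiff_singleton_add (Finset.mem_univ P) (fun k => g k (X k))]
  abel

/-- Let `f : C → D` be a map of lower `n`-triangular cochain complexes, with differentials given
by lower triangular matrices `(dC l k)` (zero for `l < k`, so the map raises the filtration
index) whose totalisation squares to zero, and `f` given by a lower triangular matrix
`(f l k)` commuting with the differentials.  If each diagonal component
`f k k : C^{k,*} → D^{k,*}` is a quasi-isomorphism of cochain complexes, then the totalisation
of `f` is a quasi-isomorphism. -/
theorem lowerTriangular_quasiIso (R : Type) [Ring R] (n : ℕ)
    (C D : Fin n → ℤ → Type)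
    [∀ p q, AddCommGroup (C p q)] [∀ p q, Module R (C p q)]
    [∀ p q, AddCommGroup (D p q)] [∀ p q, Module R (D p q)]
    (dC : ∀ (l k : Fin n) (q : ℤ), C k q →ₗ[R] C l (q + 1))
    (dD : ∀ (l k : Fin n) (q : ℤ), D k q →ₗ[R] D l (q + 1))
    (hCtri : ∀ l k q, l < k → dC l k q = 0)
    (hDtri : ∀ l k q, l < k → dD l k q = 0)
    (hCsq : ∀ (m k : Fin n) (q : ℤ), (∑ l, (dC m l (q + 1)).comp (dC l k q)) = 0)
    (hDsq : ∀ (m k : Fin n) (q : ℤ), (∑ l, (dD m l (q + 1)).comp (dD l k q)) = 0)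
    (f : ∀ (l k : Fin n) (q : ℤ), C k q →ₗ[R] D l q)
    (hftri : ∀ l k q, l < k → f l k q = 0)
    (hfcomm : ∀ (m k : Fin n) (q : ℤ),
      (∑ l, (dD m l q).comp (f l k q)) = ∑ l, (f m l (q + 1)).comp (dC l k q))
    (hdiag : ∀ k : Fin n,
      IsQuasiIso R (fun q => C k q) (fun q => D k q)
        (fun q => dC k k q) (fun q => dD k k q) (fun q => f k k q)) :
    IsQuasiIso R (fun q => ∀ p, C p q) (fun q => ∀ p, D p q)
      (fun q => LinearMap.pi fun l => ∑ k, (dC l k q).comp (LinearMap.proj k))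
      (fun q => LinearMap.pi fun l => ∑ k, (dD l k q).comp (LinearMap.proj k))
      (fun q => LinearMap.pi fun l => ∑ k, (f l k q).comp (LinearMap.proj k)) := by
  -- total d² = 0 for C
  have dCsq' : ∀ (q : ℤ) (x : ∀ p, C p q) (m : Fin n),
      ∑ a, dC m a (q+1) (∑ k, dC a k q (x k)) = 0 := by
    intro q x m
    calc ∑ a, dC m a (q+1) (∑ k, dC a k q (x k))
        = ∑ a, ∑ k, dC m a (q+1) (dC a k q (x k)) :=
          Finset.sum_congr rfl fun a _ => map_sum _ _ _
      _ = ∑ k, ∑ a, dC m a (q+1) (dC a k q (x k)) := Finset.sum_comm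
      _ = ∑ k, (∑ a, (dC m a (q+1)).comp (dC a k q)) ((x k)) := by
          simp [LinearMap.sum_apply]
      _ = 0 := by simp [hCsq]
  have dDsq' : ∀ (q : ℤ) (x : ∀ p, D p q) (m : Fin n),
      ∑ a, dD m a (q+1) (∑ k, dD a k q (x k)) = 0 := by
    intro q x m
    calc ∑ a, dD m a (q+1) (∑ k, dD a k q (x k))
        = ∑ a, ∑ k, dD m a (q+1) (dD a k q (x k)) :=
          Finset.sum_congr rfl fun a _ => map_sum _ _ _
      _ = ∑ k, ∑ a, dD m a (q+1) (dD a k q (x k)) := Finset.sum_comm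
      _ = ∑ k, (∑ a, (dD m a (q+1)).comp (dD a k q)) ((x k)) := by
          simp [LinearMap.sum_apply]
      _ = 0 := by simp [hDsq]
  -- total commutation of f with d
  have hfcomm' : ∀ (q : ℤ) (x : ∀ p, C p q) (m : Fin n),
      ∑ a, dD m a q (∑ k, f a k q (x k)) = ∑ a, f m a (q+1) (∑ k, dC a k q (x k)) := by
    intro q x m
    calc ∑ a, dD m a q (∑ k, f a k q (x k))
        = ∑ a, ∑ k, dD m a q (f a k q (x k)) :=
          Finset.sum_congr rfl fun a _ => map_sum _ _ _
      _ = ∑ k, ∑ a, dD m a q (f a k q (x k)) := Finset.sum_comm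
      _ = ∑ k, (∑ a, (dD m a q).comp (f a k q)) (x k) := by simp [LinearMap.sum_apply]
      _ = ∑ k, (∑ a, (f m a (q+1)).comp (dC a k q)) (x k) := by
          refine Finset.sum_congr rfl fun k _ => ?_
          rw [hfcomm m k q]
      _ = ∑ k, ∑ a, f m a (q+1) (dC a k q (x k)) := by simp [LinearMap.sum_apply]
      _ = ∑ a, ∑ k, f m a (q+1) (dC a k q (x k)) := Finset.sum_comm
      _ = ∑ a, f m a (q+1) (∑ k, dC a k q (x k)) :=
          Finset.sum_congr rfl fun a _ => (map_sum _ _ _).symm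
  -- diagonal commutation
  have hdcomm : ∀ (P : Fin n) (q : ℤ) (c : C P q),
      dD P P q (f P P q c) = f P P (q+1) (dC P P q c) := by
    intro P q c
    have h := LinearMap.congr_fun (hfcomm P P q) c
    rw [LinearMap.sum_apply, LinearMap.sum_apply] at h
    have hL : ∑ l, ((dD P l q).comp (f l P q)) c = ((dD P P q).comp (f P P q)) c := by
      refine Fintype.sum_eq_single P ?_
      intro l hl
      rcases lt_or_gt_of_ne hl with h' | h'
      · rw [hftri l P q h']; simp
      · rw [hDtri P l q h']; simp
    have hR : ∑ l, ((f P l (q+1)).comp (dC l P q)) c = ((f P P (q+1)).comp (dC P P q)) c := by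
      refine Fintype.sum_eq_single P ?_
      intro l hl
      rcases lt_or_gt_of_ne hl with h' | h'
      · rw [hCtri l P q h']; simp
      · rw [hftri P l (q+1) h']; simp
    rw [hL, hR] at h
    exact h
  constructor
  · -- surjectivity on cohomology
    intro q y hy
    have hy' : ∀ l, ∑ k, dD l k (q+1) (y k) = 0 := by
      intro l
      have h := congrFun hy l
      simpa [LinearMap.pi_apply, LinearMap.sum_apply] using h
    have key : ∀ p : ℕ, ∃ X : ∀ l, C l (q+1), ∃ U : ∀ l, D l q,
        (∀ l : Fin n, (l : ℕ) < p → ∑ k, dC l k (q+1) (X k) = 0) ∧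
        (∀ l : Fin n, (l : ℕ) < p →
          y l - ∑ k, f l k (q+1) (X k) - ∑ k, dD l k q (U k) = 0) := by
      intro p
      induction p with
      | zero =>
        exact ⟨0, 0, fun l hl => absurd hl (by omega), fun l hl => absurd hl (by omega)⟩
      | succ p ih =>
        obtain ⟨X, U, h1, h2⟩ := ih
        by_cases hp : p < n
        · set P : Fin n := ⟨p, hp⟩ with hPdef
          have hPv : (P : ℕ) = p := rfl
          set w : C P (q+1+1) := ∑ k, dC P k (q+1) (X k) with hw
          set yp : D P (q+1) := y P - ∑ k, f P k (q+1) (X k) - ∑ k, dD P k q (U k) with hyp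
          have hw0 : dC P P (q+1+1) w = 0 := by
            have hs : ∑ a, dC P a (q+1+1) (∑ k, dC a k (q+1) (X k)) = dC P P (q+1+1) w := by
              rw [hw]
              refine Fintype.sum_eq_single P ?_
              intro a ha
              by_cases hal : (a : ℕ) < p
              · rw [h1 a hal, map_zero]
              · have hne : (a : ℕ) ≠ p := fun h => ha (Fin.ext h)
                have hPa : P < a := by
                  show (P : ℕ) < (a : ℕ)
                  omega
                rw [hCtri P a (q+1+1) hPa]; simp
            rw [← hs]
            exact dCsq' (q+1) X P
          have hdyp : dD P P (q+1) yp = - f P P (q+1+1) w := by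
            have hs1 : ∑ a, dD P a (q+1)
                (y a - ∑ k, f a k (q+1) (X k) - ∑ k, dD a k q (U k)) = dD P P (q+1) yp := by
              rw [hyp]
              refine Fintype.sum_eq_single P ?_
              intro a ha
              by_cases hal : (a : ℕ) < p
              · rw [h2 a hal, map_zero]
              · have hne : (a : ℕ) ≠ p := fun h => ha (Fin.ext h)
                have hPa : P < a := by show (P : ℕ) < (a : ℕ); omega
                rw [hDtri P a (q+1) hPa]; simp
            have hs2 : ∑ a, dD P a (q+1)
                (y a - ∑ k, f a k (q+1) (X k) - ∑ k, dD a k q (U k))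
                = - f P P (q+1+1) w := by
              have e1 : ∀ a ∈ Finset.univ, dD P a (q+1)
                  (y a - ∑ k, f a k (q+1) (X k) - ∑ k, dD a k q (U k))
                  = dD P a (q+1) (y a) - dD P a (q+1) (∑ k, f a k (q+1) (X k))
                    - dD P a (q+1) (∑ k, dD a k q (U k)) := by
                intro a _; simp [map_sub]
              rw [Finset.sum_congr rfl e1, Finset.sum_sub_distrib, Finset.sum_sub_distrib]
              rw [hy' P, hfcomm' (q+1) X P, dDsq' q U P]
              have hs3 : ∑ a, f P a (q+1+1) (∑ k, dC a k (q+1) (X k)) = f P P (q+1+1) w := by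
                rw [hw]
                refine Fintype.sum_eq_single P ?_
                intro a ha
                by_cases hal : (a : ℕ) < p
                · rw [h1 a hal, map_zero]
                · have hne : (a : ℕ) ≠ p := fun h => ha (Fin.ext h)
                  have hPa : P < a := by show (P : ℕ) < (a : ℕ); omega
                  rw [hftri P a (q+1+1) hPa]; simp
              rw [hs3]
              abel
            rw [← hs1]
            exact hs2
          obtain ⟨v, hv⟩ := (hdiag P).2 (q+1) w hw0
            ⟨-yp, by rw [map_neg, hdyp, neg_neg]⟩
          set z : D P (q+1) := yp + f P P (q+1) v with hz
          have hz0 : dD P P (q+1) z = 0 := by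
            rw [hz, map_add, hdyp, hdcomm P (q+1) v, hv]
            abel
          obtain ⟨x', hx'0, u1, hu1⟩ := (hdiag P).1 q z hz0
          refine ⟨Function.update X P (X P + (x' - v)), Function.update U P (U P + u1),
            ?_, ?_⟩
          · intro l hl
            rw [sum_update_add]
            by_cases hlp : (l : ℕ) < p
            · have hlP : l < P := by show (l : ℕ) < (P : ℕ); omega
              rw [h1 l hlp, hCtri l P (q+1) hlP]
              simp
            · have hlP : l = P := Fin.ext (by omega)
              subst hlP
              rw [map_sub, hx'0, hv, ← hw]
              abel
          · intro l hl
            rw [sum_update_add, sum_update_add]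
            by_cases hlp : (l : ℕ) < p
            · have hlP : l < P := by show (l : ℕ) < (P : ℕ); omega
              have h2' := h2 l hlp
              rw [hftri l P (q+1) hlP, hDtri l P q hlP]
              simpa using h2'
            · have hlP : l = P := Fin.ext (by omega)
              subst hlP
              rw [map_sub]
              have hgoal : y P - (∑ k, f P k (q+1) (X k)
                  + (f P P (q+1) x' - f P P (q+1) v))
                  - (∑ k, dD P k q (U k) + dD P P q u1)
                  = (z - f P P (q+1) x') - dD P P q u1 := by
                rw [hz, hyp]; abel
              rw [hgoal, hu1]
              abel
        · exact ⟨X, U,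
            fun l hl => h1 l (by have := l.isLt; omega),
            fun l hl => h2 l (by have := l.isLt; omega)⟩
    obtain ⟨X, U, h1, h2⟩ := key n
    refine ⟨X, ?_, U, ?_⟩
    · funext l
      simpa [LinearMap.pi_apply, LinearMap.sum_apply] using h1 l l.isLt
    · funext l
      show y l - (LinearMap.pi fun l => ∑ k, (f l k (q+1)).comp (LinearMap.proj k)) X l
          = (LinearMap.pi fun l => ∑ k, (dD l k q).comp (LinearMap.proj k)) U l
      simp only [LinearMap.pi_apply, LinearMap.sum_apply, LinearMap.comp_apply,
        LinearMap.proj_apply]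
      exact sub_eq_zero.mp (h2 l l.isLt)
  · -- injectivity on cohomology
    intro q x hx hexact
    obtain ⟨u, hu⟩ := hexact
    obtain ⟨q', rfl⟩ : ∃ q', q' + 1 = q := ⟨q - 1, by ring⟩
    have hx' : ∀ l, ∑ k, dC l k (q'+1+1) (x k) = 0 := by
      intro l
      have h := congrFun hx l
      simpa [LinearMap.pi_apply, LinearMap.sum_apply] using h
    have hu' : ∀ l, ∑ k, f l k (q'+1+1) (x k) = ∑ k, dD l k (q'+1) (u k) := by
      intro l
      have h := congrFun hu l
      simpa [LinearMap.pi_apply, LinearMap.sum_apply] using h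
    have key : ∀ p : ℕ, ∃ V : ∀ l, C l (q'+1), ∃ W : ∀ l, D l q',
        (∀ l : Fin n, (l : ℕ) < p → x l - ∑ k, dC l k (q'+1) (V k) = 0) ∧
        (∀ l : Fin n, (l : ℕ) < p →
          u l - ∑ k, f l k (q'+1) (V k) - ∑ k, dD l k q' (W k) = 0) := by
      intro p
      induction p with
      | zero =>
        exact ⟨0, 0, fun l hl => absurd hl (by omega), fun l hl => absurd hl (by omega)⟩
      | succ p ih =>
        obtain ⟨V, W, h1, h2⟩ := ih
        by_cases hp : p < n
        · set P : Fin n := ⟨p, hp⟩ with hPdef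
          have hPv : (P : ℕ) = p := rfl
          set xp : C P (q'+1+1) := x P - ∑ k, dC P k (q'+1) (V k) with hxp
          set up : D P (q'+1) :=
            u P - ∑ k, f P k (q'+1) (V k) - ∑ k, dD P k q' (W k) with hup
          have hxp0 : dC P P (q'+1+1) xp = 0 := by
            have hs : ∑ a, dC P a (q'+1+1) (x a - ∑ k, dC a k (q'+1) (V k))
                = dC P P (q'+1+1) xp := by
              rw [hxp]
              refine Fintype.sum_eq_single P ?_
              intro a ha
              by_cases hal : (a : ℕ) < p
              · rw [h1 a hal, map_zero]
              · have hne : (a : ℕ) ≠ p := fun h => ha (Fin.ext h)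
                have hPa : P < a := by show (P : ℕ) < (a : ℕ); omega
                rw [hCtri P a (q'+1+1) hPa]; simp
            rw [← hs]
            have e1 : ∀ a ∈ Finset.univ, dC P a (q'+1+1) (x a - ∑ k, dC a k (q'+1) (V k))
                = dC P a (q'+1+1) (x a) - dC P a (q'+1+1) (∑ k, dC a k (q'+1) (V k)) := by
              intro a _; simp [map_sub]
            rw [Finset.sum_congr rfl e1, Finset.sum_sub_distrib, hx' P, dCsq' (q'+1) V P]
            abel
          have hfxp : f P P (q'+1+1) xp = dD P P (q'+1) up := by
            have hs : ∑ a, f P a (q'+1+1) (x a - ∑ k, dC a k (q'+1) (V k))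
                = f P P (q'+1+1) xp := by
              rw [hxp]
              refine Fintype.sum_eq_single P ?_
              intro a ha
              by_cases hal : (a : ℕ) < p
              · rw [h1 a hal, map_zero]
              · have hne : (a : ℕ) ≠ p := fun h => ha (Fin.ext h)
                have hPa : P < a := by show (P : ℕ) < (a : ℕ); omega
                rw [hftri P a (q'+1+1) hPa]; simp
            have ht : ∑ a, dD P a (q'+1)
                (u a - ∑ k, f a k (q'+1) (V k) - ∑ k, dD a k q' (W k))
                = dD P P (q'+1) up := by
              rw [hup]
              refine Fintype.sum_eq_single P ?_
              intro a ha
              by_cases hal : (a : ℕ) < p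
              · rw [h2 a hal, map_zero]
              · have hne : (a : ℕ) ≠ p := fun h => ha (Fin.ext h)
                have hPa : P < a := by show (P : ℕ) < (a : ℕ); omega
                rw [hDtri P a (q'+1) hPa]; simp
            rw [← hs, ← ht]
            have e1 : ∀ a ∈ Finset.univ, f P a (q'+1+1) (x a - ∑ k, dC a k (q'+1) (V k))
                = f P a (q'+1+1) (x a) - f P a (q'+1+1) (∑ k, dC a k (q'+1) (V k)) := by
              intro a _; simp [map_sub]
            have e2 : ∀ a ∈ Finset.univ, dD P a (q'+1)
                (u a - ∑ k, f a k (q'+1) (V k) - ∑ k, dD a k q' (W k))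
                = dD P a (q'+1) (u a) - dD P a (q'+1) (∑ k, f a k (q'+1) (V k))
                  - dD P a (q'+1) (∑ k, dD a k q' (W k)) := by
              intro a _; simp [map_sub]
            rw [Finset.sum_congr rfl e1, Finset.sum_congr rfl e2,
              Finset.sum_sub_distrib, Finset.sum_sub_distrib, Finset.sum_sub_distrib]
            rw [hu' P, ← hfcomm' (q'+1) V P, dDsq' q' W P]
            abel
          obtain ⟨v, hv⟩ := (hdiag P).2 (q'+1) xp hxp0 ⟨up, hfxp⟩
          set z : D P (q'+1) := up - f P P (q'+1) v with hz
          have hz0 : dD P P (q'+1) z = 0 := by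
            rw [hz, map_sub, ← hfxp, hdcomm P (q'+1) v, hv]
            abel
          obtain ⟨z', hz'0, w1, hw1⟩ := (hdiag P).1 q' z hz0
          refine ⟨Function.update V P (V P + (v + z')), Function.update W P (W P + w1),
            ?_, ?_⟩
          · intro l hl
            rw [sum_update_add]
            by_cases hlp : (l : ℕ) < p
            · have hlP : l < P := by show (l : ℕ) < (P : ℕ); omega
              have h1' := h1 l hlp
              rw [hCtri l P (q'+1) hlP]
              simpa using h1'
            · have hlP : l = P := Fin.ext (by omega)
              subst hlP
              rw [map_add, hv, hz'0, hxp]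
              abel
          · intro l hl
            rw [sum_update_add, sum_update_add]
            by_cases hlp : (l : ℕ) < p
            · have hlP : l < P := by show (l : ℕ) < (P : ℕ); omega
              have h2' := h2 l hlp
              rw [hftri l P (q'+1) hlP, hDtri l P q' hlP]
              simpa using h2'
            · have hlP : l = P := Fin.ext (by omega)
              subst hlP
              rw [map_add]
              have hgoal : u P - (∑ k, f P k (q'+1) (V k)
                  + (f P P (q'+1) v + f P P (q'+1) z'))
                  - (∑ k, dD P k q' (W k) + dD P P q' w1)
                  = (z - f P P (q'+1) z') - dD P P q' w1 := by
                rw [hz, hup]; abel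
              rw [hgoal, hw1]
              abel
        · exact ⟨V, W,
            fun l hl => h1 l (by have := l.isLt; omega),
            fun l hl => h2 l (by have := l.isLt; omega)⟩
    obtain ⟨V, W, h1, h2⟩ := key n
    refine ⟨V, ?_⟩
    funext l
    show (LinearMap.pi fun l => ∑ k, (dC l k (q'+1)).comp (LinearMap.proj k)) V l = x l
    simp only [LinearMap.pi_apply, LinearMap.sum_apply, LinearMap.comp_apply,
      LinearMap.proj_apply]
    exact (sub_eq_zero.mp (h1 l l.isLt)).symm
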